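/- Let N ≥ 1 and 1 ≤ N₀ ≤ N. Consider the N-legged spider problem: find bounded functions uᵢ(x) = cᵢ e^{-√(2(α+β))x} + 1/(α+β) on legs i = 1,…,N₀ and uⱼ(x) = cⱼ e^{-√(2α)x} + 1/(2α)·2 on legs j = N₀+1,…,N (i.e. solving (1/2)u'' - (α+β)u = -1 and (1/2)u'' - αu = -1 respectively), subject to continuity and Kirchhoff conditions at the origin. Then with z = β/α, the common value at the origin is u(0) = (1/α)·(1/√(1+z))·(N₀ + (N-N₀)√(1+z))/((N-N₀) + N₀√(1+z)). -/

import Mathlib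

open Real Set

lemma spider_sum_ite (N N₀ : ℕ) (h : N₀ ≤ N) (X Y : ℝ) :
    ∑ i : Fin N, (if (i : ℕ) < N₀ then X else Y) = N₀ * X + ((N - N₀ : ℕ) : ℝ) * Y := by
  rw [Fin.sum_univ_eq_sum_range (fun k => if k < N₀ then X else Y)]
  rw [Finset.range_eq_Ico, ← Finset.sum_Ico_consecutive _ (Nat.zero_le N₀) h]
  have h1 : ∑ k ∈ Finset.Ico 0 N₀, (if k < N₀ then X else Y) = N₀ * X := by
    rw [Finset.sum_congr rfl (fun k hk => by
      simp only [Finset.mem_Ico] at hk; rw [if_pos hk.2])]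
    simp [mul_comm]
  have h2 : ∑ k ∈ Finset.Ico N₀ N, (if k < N₀ then X else Y) = ((N - N₀ : ℕ) : ℝ) * Y := by
    rw [Finset.sum_congr rfl (fun k hk => by
      simp only [Finset.mem_Ico] at hk; rw [if_neg (not_lt.mpr hk.1)])]
    simp [Nat.card_Ico, mul_comm]
  rw [h1, h2]

lemma spider_deriv (c k d : ℝ) :
    deriv (fun x : ℝ => c * Real.exp (-(k * x)) + d) 0 = -(c * k) := by
  have h1 : HasDerivAt (fun x : ℝ => -(k * x)) (-k) 0 := by
    have := ((hasDerivAt_id (0:ℝ)).const_mul k).neg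
    simp only [Pi.neg_def, id, mul_one] at this
    exact this
  have h2 := ((h1.exp).const_mul c).add_const d
  have := h2.deriv
  simpa using this

/-- Generalized arcsine law on the spider: bounded solutions
`uᵢ(x) = cᵢ e^{-√(2(α+β))x} + 1/(α+β)` on the first `N₀` legs and
`uⱼ(x) = cⱼ e^{-√(2α)x} + 1/α` on the remaining `N - N₀` legs, glued by continuity and the
Kirchhoff condition at the origin, satisfy (with `z = β/α`)
`u(0) = (1/α)(1/√(1+z))(N₀ + (N-N₀)√(1+z))/((N-N₀) + N₀√(1+z))`. -/
theorem spider_occupation_time_resolvent (N N₀ : ℕ) (hN₀ : 1 ≤ N₀) (hN : N₀ ≤ N)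
    (α β : ℝ) (hα : 0 < α) (hβ : 0 < β)
    (c : Fin N → ℝ) (u : Fin N → ℝ → ℝ)
    (hu : ∀ i : Fin N, ∀ x : ℝ,
      u i x = if (i : ℕ) < N₀ then
          c i * Real.exp (-(Real.sqrt (2 * (α + β)) * x)) + 1 / (α + β)
        else c i * Real.exp (-(Real.sqrt (2 * α) * x)) + 1 / α)
    (hcont : ∀ i j, u i 0 = u j 0)
    (hKirchhoff : ∑ i : Fin N, deriv (u i) 0 = 0) :
    ∀ i, u i 0 = (1 / α) * (1 / Real.sqrt (1 + β / α)) *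
      ((N₀ : ℝ) + ((N : ℝ) - N₀) * Real.sqrt (1 + β / α)) /
        (((N : ℝ) - N₀) + (N₀ : ℝ) * Real.sqrt (1 + β / α)) := by
  have hαβ : 0 < α + β := by linarith
  set a := Real.sqrt (2 * α) with ha_def
  set b := Real.sqrt (2 * (α + β)) with hb_def
  have ha : 0 < a := Real.sqrt_pos.mpr (by linarith)
  have hb : 0 < b := Real.sqrt_pos.mpr (by linarith)
  have ha2 : a ^ 2 = 2 * α := Real.sq_sqrt (by linarith)
  have hb2 : b ^ 2 = 2 * (α + β) := Real.sq_sqrt (by linarith)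
  have hs : Real.sqrt (1 + β / α) = b / a := by
    rw [hb_def, ha_def, ← Real.sqrt_div (by linarith)]
    congr 1
    field_simp
  -- values and derivatives at 0
  have hu0 : ∀ i : Fin N, u i 0 =
      if (i : ℕ) < N₀ then c i + 1 / (α + β) else c i + 1 / α := by
    intro i
    rw [hu i 0]
    simp
  have hderiv : ∀ i : Fin N, deriv (u i) 0 =
      if (i : ℕ) < N₀ then -(c i * b) else -(c i * a) := by
    intro i
    have hfe : u i = fun x => if (i : ℕ) < N₀ then
        c i * Real.exp (-(b * x)) + 1 / (α + β)
      else c i * Real.exp (-(a * x)) + 1 / α := funext (hu i)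
    by_cases hi : (i : ℕ) < N₀
    · rw [hfe]; simp only [if_pos hi]; exact spider_deriv _ _ _
    · rw [hfe]; simp only [if_neg hi]; exact spider_deriv _ _ _
  intro i
  set v := u i 0 with hv_def
  -- express c j in terms of v
  have hc : ∀ j : Fin N, c j = if (j : ℕ) < N₀ then v - 1 / (α + β) else v - 1 / α := by
    intro j
    have := hu0 j
    rw [hcont j i] at this
    by_cases hj : (j : ℕ) < N₀
    · rw [if_pos hj] at this ⊢; linarith
    · rw [if_neg hj] at this ⊢; linarith
  set m := (N₀ : ℝ) with hm_def
  set n := ((N - N₀ : ℕ) : ℝ) with hn_def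
  have hnN : (N : ℝ) - N₀ = n := by rw [hn_def, Nat.cast_sub hN]
  have hm1 : 1 ≤ m := by rw [hm_def]; exact_mod_cast hN₀
  have hn0 : 0 ≤ n := Nat.cast_nonneg _
  -- Kirchhoff equation
  have hK : m * (-((v - 1 / (α + β)) * b)) + n * (-((v - 1 / α) * a)) = 0 := by
    rw [← spider_sum_ite N N₀ hN, ← hKirchhoff]
    apply Finset.sum_congr rfl
    intro j _
    rw [hderiv j, hc j]
    by_cases hj : (j : ℕ) < N₀ <;> simp [hj]
  rw [hnN, hs]
  -- denominators nonzero
  have hd1 : m * b + n * a > 0 := by positivity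
  have hd2 : n + m * (b / a) > 0 := by positivity
  have hE' : v * (α * (α + β) * (m * b + n * a)) = α * m * b + (α + β) * n * a := by
    have h1 : (α + β) ≠ 0 := ne_of_gt hαβ
    have h2 : α ≠ 0 := ne_of_gt hα
    field_simp at hK
    linarith [hK]
  rw [hv_def] at hE' ⊢
  field_simp
  have key : u i 0 * α * b * (a * n + b * m) * (α + β) = a * (a * m + b * n) * (α + β) := by
    linear_combination b * hE' + (α * m) * hb2 - ((α + β) * m) * ha2
  exact mul_right_cancel₀ (ne_of_gt hαβ) key
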